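/- Let E be a finite group, let F be a free group, let φ : F → E be a surjective homomorphism, and set N = Ker φ. Then the index [[F,F] : [F,N]] of [F,N] in [F,F] satisfies [[F,F] : [F,N]] ≤ |E|^{1 + log₂ |E|}. -/

import Mathlib

namespace SchurAux

open Subgroup
open scoped commutatorElement

variable {G : Type*} [Group G]

lemma map_commutator_subtype (K : Subgroup G) :
    (_root_.commutator ↥K).map K.subtype = ⁅K, K⁆ := by
  rw [_root_.commutator_def, Subgroup.map_commutator, ← MonoidHom.range_eq_map,
    K.range_subtype]

lemma card_commutator_subgroup (K : Subgroup G) :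
    Nat.card (_root_.commutator ↥K) = Nat.card ↥(⁅K, K⁆ : Subgroup G) := by
  rw [← map_commutator_subtype]
  exact Nat.card_congr (Subgroup.equivMapOfInjective _ _ K.subtype_injective).toEquiv

lemma comm_center_left (a c z : G) (hz : z ∈ center G) : ⁅a * z, c⁆ = ⁅a, c⁆ := by
  have h1 : ∀ x : G, x * z = z * x := fun x => Subgroup.mem_center_iff.mp hz x
  have h3 : z * c * z⁻¹ = c := by rw [← h1 c]; group
  simp only [commutatorElement_def, mul_inv_rev]
  calc a * z * c * (z⁻¹ * a⁻¹) * c⁻¹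
      = a * (z * c * z⁻¹) * a⁻¹ * c⁻¹ := by group
    _ = a * c * a⁻¹ * c⁻¹ := by rw [h3]

lemma comm_center_right (a c w : G) (hw : w ∈ center G) : ⁅a, c * w⁆ = ⁅a, c⁆ := by
  rw [← commutatorElement_inv, comm_center_left _ _ _ hw, commutatorElement_inv]


lemma step_card (K : Subgroup G) [hKn : K.Normal] (A : Subgroup G)
    (hA : A ≤ center G) (hAK : A ≤ K) (t : G)
    (hGen : ∀ g : G, ∃ k ∈ K, ∃ j : ℤ, g = k * t ^ j)
    (hrel : A.relIndex K ≠ 0) :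
    Nat.card (_root_.commutator G) ≤ Nat.card ↥(⁅K, K⁆ : Subgroup G) * A.relIndex K := by
  set C : Subgroup G := ⁅K, K⁆ with hC
  haveI hCn : C.Normal := Subgroup.commutator_normal K K
  set q : G →* G ⧸ C := QuotientGroup.mk' C with hqdef
  have hqsurj := QuotientGroup.mk'_surjective C
  have hqK : ∀ a b : G, a ∈ K → b ∈ K → Commute (q a) (q b) := by
    intro a b ha hb
    rw [← commutatorElement_eq_one_iff_commute, ← map_commutatorElement,
      ← MonoidHom.mem_ker, hqdef, QuotientGroup.ker_mk']
    exact commutator_mem_commutator ha hb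
  have hKmem : ∀ (x : G), x ∈ K → ∀ (g : G), g * x * g⁻¹ ∈ K := fun x hx g =>
    hKn.conj_mem x hx g
  have hcomK : ∀ (x : G), x ∈ K → ∀ g : G, ⁅x, g⁆ ∈ K := by
    intro x hx g
    have : ⁅x, g⁆ = x * (g * x⁻¹ * g⁻¹) := by group
    rw [this]
    exact mul_mem hx (hKmem x⁻¹ (inv_mem hx) g)
  let δ : ↥K →* G ⧸ C :=
    { toFun := fun k => ⁅q ↑k, q t⁆
      map_one' := by simp
      map_mul' := by
        intro x y
        have key : ⁅q ↑x * q ↑y, q t⁆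
            = (q ↑x) * ⁅q ↑y, q t⁆ * (q ↑x)⁻¹ * ⁅q ↑x, q t⁆ := by group
        have hw1 : Commute (q ↑x) ⁅q ↑y, q t⁆ := by
          rw [← map_commutatorElement]
          exact hqK _ _ x.2 (hcomK _ y.2 t)
        have hw2 : Commute ⁅q ↑y, q t⁆ ⁅q ↑x, q t⁆ := by
          rw [← map_commutatorElement, ← map_commutatorElement]
          exact hqK _ _ (hcomK _ y.2 t) (hcomK _ x.2 t)
        have h3 : (q ↑x) * ⁅q ↑y, q t⁆ * (q ↑x)⁻¹ = ⁅q ↑y, q t⁆ := by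
          rw [mul_assoc, ← hw1.inv_left.eq, ← mul_assoc, mul_inv_cancel, one_mul]
        simp only [Subgroup.coe_mul, map_mul]
        rw [key, h3, hw2.eq] }
  have hδ : ∀ k : ↥K, δ k = ⁅q ↑k, q t⁆ := fun _ => rfl
  set W : Subgroup (G ⧸ C) := δ.range with hWdef
  -- conjugation of δ k by q t and (q t)⁻¹
  have hconj_t : ∀ k : ↥K, (q t) * ⁅q ↑k, q t⁆ * (q t)⁻¹ = ⁅q (t * ↑k * t⁻¹), q t⁆ := by
    intro k
    rw [conjugate_commutatorElement]
    have h2 : q t * q t * (q t)⁻¹ = q t := by group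
    rw [h2, map_mul, map_mul, map_inv]
  have hconj_tinv : ∀ k : ↥K, (q t)⁻¹ * ⁅q ↑k, q t⁆ * (q t) = ⁅q (t⁻¹ * ↑k * t), q t⁆ := by
    intro k
    have := conjugate_commutatorElement (q ↑k) (q t) (q t)⁻¹
    rw [inv_inv] at this
    rw [this]
    have h2 : (q t)⁻¹ * q t * q t = q t := by group
    rw [h2, map_mul, map_mul, map_inv]
  have htmemK : ∀ (x : G), x ∈ K → t * x * t⁻¹ ∈ K := fun x hx => hKmem x hx t
  have htinvmemK : ∀ (x : G), x ∈ K → t⁻¹ * x * t ∈ K := fun x hx => by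
    simpa using hKmem x hx t⁻¹
  -- W is normal
  have hnormK : ∀ (x : G), x ∈ K → q x ∈ Subgroup.normalizer (W : Set (G ⧸ C)) := by
    intro x hx
    rw [Subgroup.mem_normalizer_iff]
    intro w
    constructor
    · rintro ⟨k, rfl⟩
      have hc : Commute (q x) (δ k) := by
        rw [hδ, ← map_commutatorElement]
        exact hqK _ _ hx (hcomK _ k.2 t)
      have : q x * δ k * (q x)⁻¹ = δ k := by
        rw [mul_assoc, ← hc.inv_left.eq, ← mul_assoc, mul_inv_cancel, one_mul]
      rw [this]
      exact ⟨k, rfl⟩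
    · intro hw
      obtain ⟨k, hk⟩ := hw
      have hc : Commute (q x) (δ k) := by
        rw [hδ, ← map_commutatorElement]
        exact hqK _ _ hx (hcomK _ k.2 t)
      have hw' : w = (q x)⁻¹ * δ k * (q x) := by rw [hk]; group
      have h5 : (q x)⁻¹ * δ k * (q x) = δ k := by
        rw [mul_assoc, ← hc.eq, ← mul_assoc, inv_mul_cancel, one_mul]
      rw [hw', h5]
      exact ⟨k, rfl⟩
  have hnormT : q t ∈ Subgroup.normalizer (W : Set (G ⧸ C)) := by
    rw [Subgroup.mem_normalizer_iff]
    intro w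
    constructor
    · rintro ⟨k, rfl⟩
      refine ⟨⟨t * ↑k * t⁻¹, htmemK _ k.2⟩, ?_⟩
      rw [hδ, hδ]
      exact (hconj_t k).symm
    · intro hw
      obtain ⟨k, hk⟩ := hw
      have hw' : w = (q t)⁻¹ * δ k * (q t) := by rw [hk]; group
      refine ⟨⟨t⁻¹ * ↑k * t, htinvmemK _ k.2⟩, ?_⟩
      rw [hδ, hw', hδ]
      exact (hconj_tinv k).symm
  have hWn : W.Normal := by
    rw [← Subgroup.normalizer_eq_top_iff]
    rw [eq_top_iff]
    rintro x -
    obtain ⟨g, rfl⟩ := hqsurj x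
    obtain ⟨k, hk, j, rfl⟩ := hGen g
    show q (k * t ^ j) ∈ Subgroup.normalizer (W : Set (G ⧸ C))
    rw [map_mul, map_zpow]
    exact mul_mem (hnormK k hk) (zpow_mem hnormT j)
  haveI := hWn
  -- the commutator of G ⧸ C is contained in W
  have hcommQ : _root_.commutator (G ⧸ C) ≤ W := by
    rw [_root_.commutator_def, Subgroup.commutator_le]
    intro a _ b _
    obtain ⟨g₁, rfl⟩ := hqsurj a
    obtain ⟨g₂, rfl⟩ := hqsurj b
    obtain ⟨k₁, hk₁, j₁, rfl⟩ := hGen g₁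
    obtain ⟨k₂, hk₂, j₂, rfl⟩ := hGen g₂
    set r : (G ⧸ C) →* (G ⧸ C) ⧸ W := QuotientGroup.mk' W with hrdef
    have hmemW : ∀ u : G ⧸ C, r u = 1 → u ∈ W := by
      intro u hu
      rwa [hrdef, ← MonoidHom.mem_ker, QuotientGroup.ker_mk'] at hu
    apply hmemW
    rw [map_commutatorElement, commutatorElement_eq_one_iff_commute]
    have c1 : Commute (r (q k₁)) (r (q k₂)) := (hqK _ _ hk₁ hk₂).map r
    have baseT : ∀ x : G, x ∈ K → Commute (r (q x)) (r (q t)) := by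
      intro x hx
      rw [← commutatorElement_eq_one_iff_commute, ← map_commutatorElement]
      apply (QuotientGroup.eq_one_iff _).mpr
      exact ⟨⟨x, hx⟩, rfl⟩
    have c2 := baseT k₁ hk₁
    have c3 := (baseT k₂ hk₂).symm
    have hq1 : (QuotientGroup.mk' C) (k₁ * t ^ j₁) = q k₁ * (q t) ^ j₁ := by
      rw [← hqdef, map_mul, map_zpow]
    have hq2 : (QuotientGroup.mk' C) (k₂ * t ^ j₂) = q k₂ * (q t) ^ j₂ := by
      rw [← hqdef, map_mul, map_zpow]
    rw [hq1, hq2, map_mul, map_mul, map_zpow, map_zpow]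
    have hA1 : Commute (r (q k₁)) (r (q k₂) * (r (q t)) ^ j₂) :=
      c1.mul_right (c2.zpow_right j₂)
    have hA2 : Commute ((r (q t)) ^ j₁) (r (q k₂) * (r (q t)) ^ j₂) :=
      (c3.mul_right ((Commute.refl (r (q t))).zpow_right j₂)).zpow_left j₁
    exact hA1.mul_left hA2
  -- counting
  -- card W divides A.relIndex K
  have hkerδ : A.subgroupOf K ≤ δ.ker := by
    intro a ha
    rw [MonoidHom.mem_ker, hδ, ← map_commutatorElement]
    have hcen : (↑a : G) ∈ center G := hA (Subgroup.mem_subgroupOf.mp ha)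
    have : ⁅(↑a : G), t⁆ = 1 := commutatorElement_eq_one_iff_commute.mpr
      (Subgroup.mem_center_iff.mp hcen t).symm
    rw [this, map_one]
  have hcardW : Nat.card ↥W ∣ A.relIndex K := by
    have h1 : Nat.card ↥W = δ.ker.index := by
      rw [hWdef, ← Subgroup.index_ker]
    rw [h1]
    exact Subgroup.index_dvd_of_le hkerδ
  have hWfin : Finite ↥W := by
    apply Nat.finite_of_card_ne_zero
    intro h0
    rw [h0] at hcardW
    exact hrel (Nat.eq_zero_of_zero_dvd hcardW)
  have hcardcommQ : Nat.card ↥(_root_.commutator (G ⧸ C)) ≤ A.relIndex K := by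
    have hle : Nat.card ↥(_root_.commutator (G ⧸ C)) ≤ Nat.card ↥W := by
      have hfin : (W : Set (G ⧸ C)).Finite := Set.toFinite _
      exact Nat.card_mono hfin hcommQ
    exact hle.trans (Nat.le_of_dvd (Nat.pos_of_ne_zero hrel) hcardW)
  -- card (commutator G) = card C * card (commutator (G ⧸ C))
  set H : Subgroup G := _root_.commutator G with hHdef
  have hCH : C ≤ H := by
    rw [hC, hHdef, _root_.commutator_def]
    exact Subgroup.commutator_mono le_top le_top
  set f : ↥H →* G ⧸ C := q.comp H.subtype with hfdef
  have hfker : f.ker = C.subgroupOf H := by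
    rw [hfdef, ← MonoidHom.comap_ker, hqdef, QuotientGroup.ker_mk']
    rfl
  have hfrange : f.range = H.map q := by
    rw [hfdef, MonoidHom.range_comp, Subgroup.range_subtype]
  have hmapH : H.map q = _root_.commutator (G ⧸ C) := by
    rw [hHdef, _root_.commutator_def, Subgroup.map_commutator,
      Subgroup.map_top_of_surjective _ hqsurj, _root_.commutator_def]
  have hsplit : Nat.card ↥H = Nat.card ↥C * Nat.card ↥(_root_.commutator (G ⧸ C)) := by
    have e1 : Nat.card ↥(f.ker) = Nat.card ↥C := by
      rw [hfker]
      exact Nat.card_congr (Subgroup.subgroupOfEquivOfLe hCH).toEquiv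
    have e2 : f.ker.index = Nat.card ↥(_root_.commutator (G ⧸ C)) := by
      rw [Subgroup.index_ker, hfrange, hmapH]
    rw [← e1, ← e2]
    exact (Subgroup.card_mul_index f.ker).symm
  calc Nat.card ↥(_root_.commutator G)
      = Nat.card ↥C * Nat.card ↥(_root_.commutator (G ⧸ C)) := hsplit
    _ ≤ Nat.card ↥C * A.relIndex K := Nat.mul_le_mul_left _ hcardcommQ


section PGroup
variable {Q : Type*} [Group Q]

lemma pgroup_commutator_ne_top : ∀ (n : ℕ) (Q : Type*) [Group Q] [Finite Q] [Nontrivial Q]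
    (p : ℕ), p.Prime → IsPGroup p Q → Nat.card Q = n → _root_.commutator Q ≠ ⊤ := by
  intro n
  induction n using Nat.strong_induction_on with
  | _ n IH =>
  intro Q _ _ _ p hp hpQ hn
  haveI : Fact p.Prime := ⟨hp⟩
  by_cases hcent : center Q = ⊤
  · have : _root_.commutator Q = ⊥ := by
      rw [_root_.commutator_def, eq_bot_iff, Subgroup.commutator_le]
      intro g₁ _ g₂ _
      have hc : g₂ ∈ center Q := hcent ▸ mem_top g₂
      rw [Subgroup.mem_bot]
      exact commutatorElement_eq_one_iff_commute.mpr
        (Subgroup.mem_center_iff.mp hc g₁)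
    rw [this]
    intro h
    obtain ⟨x, hx⟩ := exists_ne (1 : Q)
    exact hx ((Subgroup.mem_bot).mp (h ▸ mem_top x))
  · -- pass to Q ⧸ center Q
    obtain ⟨x, hx⟩ : ∃ x : Q, x ∉ center Q := by
      by_contra h
      push_neg at h
      exact hcent ((Subgroup.eq_top_iff' _).mpr h)
    haveI : Nontrivial (Q ⧸ center Q) := by
      refine ⟨⟨QuotientGroup.mk x, 1, ?_⟩⟩
      rw [Ne, QuotientGroup.eq_one_iff]
      exact hx
    have hcard : Nat.card (Q ⧸ center Q) < n := by
      have h1 : Nat.card ↥(center Q) * (center Q).index = Nat.card Q :=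
        Subgroup.card_mul_index _
      have h2 : (center Q).index = Nat.card (Q ⧸ center Q) := Subgroup.index_eq_card _
      haveI : Nontrivial ↥(center Q) := hpQ.center_nontrivial
      have h3 : 2 ≤ Nat.card ↥(center Q) := Finite.one_lt_card
      have h4 : 0 < Nat.card (Q ⧸ center Q) := Nat.card_pos
      rw [h2] at h1
      calc Nat.card (Q ⧸ center Q) < 2 * Nat.card (Q ⧸ center Q) := by omega
        _ ≤ Nat.card ↥(center Q) * Nat.card (Q ⧸ center Q) :=
            Nat.mul_le_mul_right _ h3
        _ = n := by rw [h1, hn]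
    have hne := IH _ hcard (Q ⧸ center Q) p hp (hpQ.to_quotient _) rfl
    intro htop
    apply hne
    have : (_root_.commutator Q).map (QuotientGroup.mk' (center Q))
        = _root_.commutator (Q ⧸ center Q) := by
      rw [_root_.commutator_def, Subgroup.map_commutator,
        Subgroup.map_top_of_surjective _ (QuotientGroup.mk'_surjective _),
        _root_.commutator_def]
    rw [← this, htop]
    exact Subgroup.map_top_of_surjective _ (QuotientGroup.mk'_surjective _)

lemma exists_max_subgroup (Q : Type*) [Group Q] [Finite Q] (h : _root_.commutator Q ≠ ⊤) :
    ∃ M : Subgroup Q, M.Normal ∧ M ≠ ⊤ ∧ ∀ S : Subgroup Q, M ≤ S → S = M ∨ S = ⊤ := by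
  obtain ⟨M, hM, hmax⟩ := Set.Finite.exists_maximalFor (id : Subgroup Q → Subgroup Q)
    {S : Subgroup Q | _root_.commutator Q ≤ S ∧ S ≠ ⊤} (Set.toFinite _)
    ⟨_root_.commutator Q, le_refl _, h⟩
  refine ⟨M, ?_, hM.2, ?_⟩
  · constructor
    intro m hm g
    have hcomm : ⁅m⁻¹, g⁻¹⁆ ∈ _root_.commutator Q := by
      rw [_root_.commutator_def]
      exact commutator_mem_commutator (mem_top _) (mem_top _)
    have : g * m * g⁻¹ = m * ⁅m⁻¹, g⁆ := by group
    rw [this]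
    have hcomm' : ⁅m⁻¹, g⁆ ∈ _root_.commutator Q := by
      rw [_root_.commutator_def]
      exact commutator_mem_commutator (mem_top _) (mem_top _)
    exact mul_mem hm (hM.1 hcomm')
  · intro S hMS
    by_cases hS : S = ⊤
    · right; exact hS
    · left
      exact le_antisymm (hmax ⟨hM.1.trans hMS, hS⟩ hMS) hMS
end PGroup

universe u v

lemma solv : ∀ (n : ℕ) {G : Type u} {Q : Type v} [Group G] [Group Q] [Finite Q]
    (p : ℕ), p.Prime → IsPGroup p Q → ∀ (ψ : G →* Q), Function.Surjective ψ →
    ψ.ker ≤ Subgroup.center G → Nat.card Q = n →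
    Nat.card (_root_.commutator G) ≤ n ^ Nat.log 2 n := by
  intro n
  induction n using Nat.strong_induction_on with
  | _ n IH =>
  intro G Q _ _ _ p hp hpQ ψ hsurj hker hn
  rcases eq_or_ne n 1 with h1 | h1
  · haveI hQsub : Subsingleton Q := by
      rw [h1] at hn
      exact (Nat.card_eq_one_iff_unique.mp hn).1
    have hbot : _root_.commutator G = ⊥ := by
      rw [_root_.commutator_def, eq_bot_iff, Subgroup.commutator_le]
      intro g₁ _ g₂ _
      rw [Subgroup.mem_bot]
      have hg2 : g₂ ∈ ψ.ker := by rw [MonoidHom.mem_ker]; exact Subsingleton.elim _ _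
      exact commutatorElement_eq_one_iff_commute.mpr
        (Subgroup.mem_center_iff.mp (hker hg2) g₁)
    rw [hbot, h1]
    simp
  · haveI : Nontrivial Q := by
      apply Finite.one_lt_card_iff_nontrivial.mp
      have h0 : 0 < Nat.card Q := Nat.card_pos
      omega
    have hne := pgroup_commutator_ne_top (Nat.card Q) Q p hp hpQ rfl
    obtain ⟨M, hMnorm, hMne, hMmax⟩ := exists_max_subgroup Q hne
    haveI := hMnorm
    obtain ⟨x, hx⟩ : ∃ x : Q, x ∉ M := by
      by_contra h; push_neg at h; exact hMne ((Subgroup.eq_top_iff' _).mpr h)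
    have hx1 : (QuotientGroup.mk' M) x ≠ 1 := by
      rw [Ne, ← MonoidHom.mem_ker, QuotientGroup.ker_mk']; exact hx
    haveI : Nontrivial (Q ⧸ M) := ⟨⟨_, 1, hx1⟩⟩
    have hsubQ : ∀ S : Subgroup (Q ⧸ M), S = ⊥ ∨ S = ⊤ := by
      intro S
      have hMS : M ≤ S.comap (QuotientGroup.mk' M) := by
        intro mm hm
        rw [Subgroup.mem_comap]
        have h2 : (QuotientGroup.mk' M) mm = 1 := by
          rw [← MonoidHom.mem_ker, QuotientGroup.ker_mk']; exact hm
        rw [h2]; exact one_mem S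
      rcases hMmax _ hMS with hS | hS
      · left
        have h3 := Subgroup.map_comap_eq_self_of_surjective
          (QuotientGroup.mk'_surjective M) S
        rw [← h3, hS, Subgroup.map_eq_bot_iff, QuotientGroup.ker_mk']
      · right
        have h3 := Subgroup.map_comap_eq_self_of_surjective
          (QuotientGroup.mk'_surjective M) S
        rw [← h3, hS]
        exact Subgroup.map_top_of_surjective _ (QuotientGroup.mk'_surjective M)
    have hgen : ∀ u : Q ⧸ M, ∃ j : ℤ, ((QuotientGroup.mk' M) x) ^ j = u := by
      intro u
      have hzp : Subgroup.zpowers ((QuotientGroup.mk' M) x) = ⊤ := by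
        rcases hsubQ (Subgroup.zpowers _) with hS | hS
        · exact absurd (Subgroup.zpowers_eq_bot.mp hS) hx1
        · exact hS
      have hu : u ∈ Subgroup.zpowers ((QuotientGroup.mk' M) x) := hzp ▸ mem_top u
      exact Subgroup.mem_zpowers_iff.mp hu
    obtain ⟨t, ht⟩ := hsurj x
    set K : Subgroup G := M.comap ψ with hKdef
    haveI hKn : K.Normal := hMnorm.comap ψ
    have hAK : ψ.ker ≤ K := by
      intro g hg
      rw [hKdef, Subgroup.mem_comap]
      rw [MonoidHom.mem_ker] at hg
      rw [hg]; exact one_mem M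
    have hGen : ∀ g : G, ∃ k ∈ K, ∃ j : ℤ, g = k * t ^ j := by
      intro g
      obtain ⟨j, hj⟩ := hgen ((QuotientGroup.mk' M) (ψ g))
      refine ⟨g * t ^ (-j), ?_, j, by group⟩
      rw [Subgroup.mem_comap, map_mul, map_zpow, ht]
      have hj' : (QuotientGroup.mk' M) (x ^ j) = (QuotientGroup.mk' M) (ψ g) := by
        rw [map_zpow]; exact hj
      have hmem : (x ^ j)⁻¹ * ψ g ∈ M := by
        have : (QuotientGroup.mk' M) ((x ^ j)⁻¹ * ψ g) = 1 := by
          rw [map_mul, map_inv, hj']; group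
        rwa [← MonoidHom.mem_ker, QuotientGroup.ker_mk'] at this
      have hcm := hMnorm.conj_mem _ hmem (ψ g)
      have heq : ψ g * ((x ^ j)⁻¹ * ψ g) * (ψ g)⁻¹ = ψ g * x ^ (-j) := by group
      rwa [heq] at hcm
    have hrelval : (ψ.ker).relIndex K = Nat.card ↥M := by
      rw [Subgroup.relIndex_ker, Subgroup.map_comap_eq_self_of_surjective hsurj]
    set m := Nat.card ↥M with hm
    have hm0 : m ≠ 0 := Nat.card_pos.ne'
    have hstep := step_card K ψ.ker hker hAK t hGen (by rw [hrelval]; exact hm0)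
    rw [hrelval] at hstep
    set ψK : ↥K →* ↥M := (ψ.comp K.subtype).codRestrict M (fun k => k.2) with hψK
    have hψKsurj : Function.Surjective ψK := by
      rintro ⟨u, hu⟩
      obtain ⟨g, hg⟩ := hsurj u
      have hgK : g ∈ K := by rw [hKdef, Subgroup.mem_comap, hg]; exact hu
      exact ⟨⟨g, hgK⟩, Subtype.ext (by simp [hψK, MonoidHom.codRestrict, hg])⟩
    have hψKker : ψK.ker ≤ Subgroup.center ↥K := by
      intro k hk
      have hk1 : ψ (k : G) = 1 := by
        rw [MonoidHom.mem_ker] at hk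
        have h4 := congrArg (Subtype.val) hk
        simpa [hψK, MonoidHom.codRestrict] using h4
      have hcen : (k : G) ∈ Subgroup.center G := hker (by rwa [MonoidHom.mem_ker])
      rw [Subgroup.mem_center_iff]
      intro b
      exact Subtype.ext (Subgroup.mem_center_iff.mp hcen (b : G))
    have h2m : 2 * m ≤ n := by
      have h1' : Nat.card ↥M * M.index = Nat.card Q := Subgroup.card_mul_index M
      have h2' : M.index = Nat.card (Q ⧸ M) := Subgroup.index_eq_card M
      have h3' : 2 ≤ Nat.card (Q ⧸ M) := Finite.one_lt_card
      rw [hn] at h1'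
      calc 2 * m ≤ M.index * m := by rw [h2']; exact Nat.mul_le_mul_right m h3'
        _ = m * M.index := Nat.mul_comm _ _
        _ = n := h1'
    have hmlt : m < n := lt_of_lt_of_le (by omega) h2m
    have hIH := IH m hmlt p hp (hpQ.to_subgroup M) ψK hψKsurj hψKker rfl
    have hcard : Nat.card ↥(⁅K, K⁆ : Subgroup G) ≤ m ^ Nat.log 2 m := by
      rw [← card_commutator_subgroup K]; exact hIH
    have hfinal : Nat.card (_root_.commutator G) ≤ m ^ Nat.log 2 m * m :=
      hstep.trans (Nat.mul_le_mul_right m hcard)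
    have hlog : Nat.log 2 m + 1 ≤ Nat.log 2 n := by
      have := Nat.log_mul_base (b := 2) (n := m) one_lt_two hm0
      calc Nat.log 2 m + 1 = Nat.log 2 (m * 2) := this.symm
        _ ≤ Nat.log 2 n := Nat.log_mono_right (by omega)
    have hn1 : 1 ≤ n := by omega
    calc Nat.card (_root_.commutator G) ≤ m ^ Nat.log 2 m * m := hfinal
      _ = m ^ (Nat.log 2 m + 1) := (pow_succ m _).symm
      _ ≤ n ^ (Nat.log 2 m + 1) := Nat.pow_le_pow_left (by omega) _
      _ ≤ n ^ Nat.log 2 n := Nat.pow_le_pow_right hn1 hlog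

section Transfer
variable {G : Type*} [Group G] {E : Type*} [Group E]

lemma transfer_mem [Finite E] (ψ : G →* E) (hsurj : Function.Surjective ψ)
    (hker : ψ.ker ≤ center G) (p : ℕ) [hfp : Fact p.Prime] (P : Sylow p E) :
    ∀ x : G, x ∈ ψ.ker → x ∈ _root_.commutator G → (∃ a : ℕ, x ^ p ^ a = 1) →
      x ∈ (⁅(P : Subgroup E).comap ψ, (P : Subgroup E).comap ψ⁆ : Subgroup G) := by
  rintro x hxker hxcomm ⟨a, hxa⟩
  set Pt : Subgroup G := (P : Subgroup E).comap ψ with hPt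
  have hidx : Pt.index = (P : Subgroup E).index :=
    Subgroup.index_comap_of_surjective _ hsurj
  haveI : Pt.FiniteIndex := by
    constructor
    rw [hidx]
    exact Subgroup.index_ne_zero_of_finite
  set φ : ↥Pt →* Abelianization ↥Pt := Abelianization.of with hφ
  set V : G →* Abelianization ↥Pt := MonoidHom.transfer φ with hV
  have hxc : x ∈ center G := hker hxker
  have key : ∀ (k : ℕ) (g₀ : G), g₀⁻¹ * x ^ k * g₀ ∈ Pt → g₀⁻¹ * x ^ k * g₀ = x ^ k := by
    intro k g₀ _
    have hxk : x ^ k ∈ center G := pow_mem hxc k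
    have h2 : g₀⁻¹ * x ^ k = x ^ k * g₀⁻¹ := Subgroup.mem_center_iff.mp hxk g₀⁻¹
    rw [h2]; group
  have hVx := MonoidHom.transfer_eq_pow φ x key
  have hV1 : V x = 1 := by
    have hle : _root_.commutator G ≤ V.ker := by
      rw [_root_.commutator_def, Subgroup.commutator_le]
      intro g₁ _ g₂ _
      rw [MonoidHom.mem_ker, map_commutatorElement,
        commutatorElement_eq_one_iff_commute]
      exact Commute.all _ _
    have := hle hxcomm
    rwa [MonoidHom.mem_ker] at this
  rw [← hV] at hVx
  rw [hV1] at hVx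
  have hmem : (⟨x ^ Pt.index, MonoidHom.transfer_eq_pow_aux x key⟩ : ↥Pt)
      ∈ _root_.commutator ↥Pt := by
    have : φ (⟨x ^ Pt.index, MonoidHom.transfer_eq_pow_aux x key⟩ : ↥Pt) = 1 := hVx.symm
    exact (QuotientGroup.eq_one_iff _).mp this
  have hxPt : x ^ Pt.index ∈ (⁅Pt, Pt⁆ : Subgroup G) := by
    rw [← map_commutator_subtype]
    exact ⟨_, hmem, rfl⟩
  have hord : orderOf x ∣ p ^ a := orderOf_dvd_of_pow_eq_one hxa
  have hpidx : ¬ p ∣ Pt.index := by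
    rw [hidx]
    exact P.not_dvd_index
  have hcop : (Pt.index).Coprime (orderOf x) := by
    obtain ⟨b, _, hbe⟩ := (Nat.dvd_prime_pow hfp.out).mp hord
    rw [hbe]
    exact (((Nat.Prime.coprime_iff_not_dvd hfp.out).mpr hpidx).symm).pow_right b
  obtain ⟨m, hm⟩ := exists_pow_eq_self_of_coprime hcop
  rw [← hm]
  exact pow_mem hxPt m

lemma finite_commutatorSet_of_finite_quotient_center
    (hfin : Finite (G ⧸ center G)) : Finite (commutatorSet G) := by
  have hwd : ∀ (a₁ b₁ a₂ b₂ : G), (QuotientGroup.leftRel (center G)) a₁ a₂ →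
      (QuotientGroup.leftRel (center G)) b₁ b₂ → ⁅a₁, b₁⁆ = ⁅a₂, b₂⁆ := by
    intro a₁ b₁ a₂ b₂ ha hb
    rw [QuotientGroup.leftRel_apply] at ha hb
    have ha2 : a₂ = a₁ * (a₁⁻¹ * a₂) := by group
    have hb2 : b₂ = b₁ * (b₁⁻¹ * b₂) := by group
    rw [ha2, hb2, comm_center_left _ _ _ ha, comm_center_right _ _ _ hb]
  let F : (G ⧸ center G) → (G ⧸ center G) → G :=
    Quotient.lift₂ (fun a b => ⁅a, b⁆) hwd
  have hsub : commutatorSet G ⊆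
      Set.range (fun pq : (G ⧸ center G) × (G ⧸ center G) => F pq.1 pq.2) := by
    rintro w ⟨g₁, g₂, rfl⟩
    exact ⟨(QuotientGroup.mk g₁, QuotientGroup.mk g₂), rfl⟩
  exact ((Set.finite_range _).subset hsub).to_subtype
end Transfer

section Main
variable {G : Type*} [Group G] {E : Type*} [Group E]

lemma main_card [Finite E] (ψ : G →* E) (hsurj : Function.Surjective ψ)
    (hker : ψ.ker ≤ center G) :
    0 < Nat.card ↥(_root_.commutator G) ∧
    Nat.card ↥(_root_.commutator G) ≤ Nat.card E ^ (1 + Nat.log 2 (Nat.card E)) := by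
  haveI hfinq : Finite (G ⧸ ψ.ker) :=
    Finite.of_equiv E (QuotientGroup.quotientKerEquivOfSurjective ψ hsurj).symm.toEquiv
  haveI hfinZ : Finite (G ⧸ center G) := by
    have hle : ψ.ker ≤ (center G).comap (MonoidHom.id G) := by simpa using hker
    apply Finite.of_surjective (QuotientGroup.map ψ.ker (center G) (MonoidHom.id G) hle)
    intro y
    obtain ⟨g, rfl⟩ := QuotientGroup.mk_surjective y
    exact ⟨QuotientGroup.mk g, by rw [QuotientGroup.map_mk]; rfl⟩
  haveI hcsF : Finite (commutatorSet G) :=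
    finite_commutatorSet_of_finite_quotient_center hfinZ
  haveI hcomF : Finite ↥(_root_.commutator G) := inferInstance
  refine ⟨Nat.card_pos, ?_⟩
  set n := Nat.card E with hn
  have hn0 : n ≠ 0 := Nat.card_pos.ne'
  set c := Nat.log 2 n with hc
  set H : Subgroup G := _root_.commutator G with hH
  set f : ↥H →* E := ψ.comp H.subtype with hf
  have hsplit : Nat.card ↥H = Nat.card ↥(f.ker) * Nat.card ↥(f.range) := by
    rw [← Subgroup.index_ker]; exact (Subgroup.card_mul_index f.ker).symm
  have hr : Nat.card ↥(f.range) ≤ n :=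
    Nat.card_le_card_of_injective f.range.subtype f.range.subtype_injective
  set M : Subgroup G := ψ.ker ⊓ H with hM
  have hcardker : Nat.card ↥(f.ker) = Nat.card ↥M := by
    have h1 : f.ker = (ψ.ker).subgroupOf H := by
      rw [hf, ← MonoidHom.comap_ker]; rfl
    have h2 : ((ψ.ker).subgroupOf H).map H.subtype = M := Subgroup.subgroupOf_map_subtype _ _
    rw [h1, ← h2]
    exact Nat.card_congr (Subgroup.equivMapOfInjective _ _ H.subtype_injective).toEquiv
  have hMfin : Finite ↥M := Finite.of_injective
    (Subgroup.inclusion (inf_le_right : M ≤ H)) (Subgroup.inclusion_injective _)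
  set cM := Nat.card ↥M with hcM
  have hcM0 : cM ≠ 0 := Nat.card_pos.ne'
  -- per-prime bound
  have hkey : ∀ p : ℕ, p.Prime → p ^ cM.factorization p ≤ (p ^ n.factorization p) ^ c := by
    intro p hp
    haveI : Fact p.Prime := ⟨hp⟩
    have P : Sylow p E := default
    set Pt : Subgroup G := (P : Subgroup E).comap ψ with hPtd
    have hPtH : (⁅Pt, Pt⁆ : Subgroup G) ≤ H := by
      rw [hH, _root_.commutator_def]
      exact Subgroup.commutator_mono le_top le_top
    haveI hfinPt : Finite ↥(⁅Pt, Pt⁆ : Subgroup G) :=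
      Finite.of_injective (Subgroup.inclusion hPtH) (Subgroup.inclusion_injective _)
    have S : Sylow p ↥M := default
    have hScard : Nat.card ↥(S : Subgroup ↥M) = p ^ cM.factorization p :=
      Sylow.card_eq_multiplicity S
    have hmemS : ∀ s : ↥M, s ∈ (S : Subgroup ↥M) → (s : G) ∈ (⁅Pt, Pt⁆ : Subgroup G) := by
      intro s hs
      have hpe : ∃ a : ℕ, (s : G) ^ p ^ a = 1 := by
        obtain ⟨a, ha⟩ := S.isPGroup' ⟨s, hs⟩
        refine ⟨a, ?_⟩
        have h5 := congrArg (fun z : ↥(S : Subgroup ↥M) => ((z : ↥M) : G)) ha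
        simpa using h5
      have hsM : (s : G) ∈ ψ.ker ⊓ H := s.2
      rw [Subgroup.mem_inf] at hsM
      exact transfer_mem ψ hsurj hker p P (s : G) hsM.1 hsM.2 hpe
    have hle1 : Nat.card ↥(S : Subgroup ↥M) ≤ Nat.card ↥(⁅Pt, Pt⁆ : Subgroup G) := by
      have hmap : (S : Subgroup ↥M).map M.subtype ≤ (⁅Pt, Pt⁆ : Subgroup G) := by
        rintro w ⟨s, hs, rfl⟩
        exact hmemS s hs
      have e1 : Nat.card ↥(S : Subgroup ↥M) =
          Nat.card ↥((S : Subgroup ↥M).map M.subtype) :=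
        Nat.card_congr (Subgroup.equivMapOfInjective _ _ M.subtype_injective).toEquiv
      rw [e1]
      exact Nat.card_mono (Set.toFinite _) hmap
    -- solv for Pt
    have hψP : ∀ k : ↥Pt, ψ (Pt.subtype k) ∈ (P : Subgroup E) := fun k => k.2
    set ψP : ↥Pt →* ↥(P : Subgroup E) :=
      (ψ.comp Pt.subtype).codRestrict _ hψP with hψPd
    have hψPsurj : Function.Surjective ψP := by
      rintro ⟨u, hu⟩
      obtain ⟨g, hg⟩ := hsurj u
      have hgPt : g ∈ Pt := by rw [hPtd, Subgroup.mem_comap, hg]; exact hu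
      exact ⟨⟨g, hgPt⟩, Subtype.ext (by simp [hψPd, MonoidHom.codRestrict, hg])⟩
    have hψPker : ψP.ker ≤ Subgroup.center ↥Pt := by
      intro k hk
      have hk1 : ψ (k : G) = 1 := by
        rw [MonoidHom.mem_ker] at hk
        have h4 := congrArg (Subtype.val) hk
        simpa [hψPd, MonoidHom.codRestrict] using h4
      have hcen : (k : G) ∈ Subgroup.center G := hker (by rwa [MonoidHom.mem_ker])
      rw [Subgroup.mem_center_iff]
      intro b
      exact Subtype.ext (Subgroup.mem_center_iff.mp hcen (b : G))
    have hsolv := solv (Nat.card ↥(P : Subgroup E)) p hp P.isPGroup' ψP hψPsurj hψPker rfl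
    have hcardP : Nat.card ↥(P : Subgroup E) = p ^ n.factorization p :=
      Sylow.card_eq_multiplicity P
    have hPle : Nat.card ↥(P : Subgroup E) ≤ n :=
      Nat.card_le_card_of_injective (P : Subgroup E).subtype
        (P : Subgroup E).subtype_injective
    have hlogP : Nat.log 2 (Nat.card ↥(P : Subgroup E)) ≤ c := Nat.log_mono_right hPle
    have hP1 : 1 ≤ Nat.card ↥(P : Subgroup E) := Nat.card_pos
    calc p ^ cM.factorization p = Nat.card ↥(S : Subgroup ↥M) := hScard.symm
      _ ≤ Nat.card ↥(⁅Pt, Pt⁆ : Subgroup G) := hle1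
      _ = Nat.card ↥(_root_.commutator ↥Pt) := (card_commutator_subgroup Pt).symm
      _ ≤ Nat.card ↥(P : Subgroup E) ^ Nat.log 2 (Nat.card ↥(P : Subgroup E)) := hsolv
      _ ≤ Nat.card ↥(P : Subgroup E) ^ c := Nat.pow_le_pow_right hP1 hlogP
      _ = (p ^ n.factorization p) ^ c := by rw [hcardP]
  -- assemble: cM ≤ n ^ c
  have hsubPF : cM.primeFactors ⊆ n.primeFactors := by
    intro p hp
    have hpp := Nat.prime_of_mem_primeFactors hp
    have hpdvd := Nat.dvd_of_mem_primeFactors hp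
    have hppos : 0 < cM.factorization p :=
      Nat.Prime.factorization_pos_of_dvd hpp hcM0 hpdvd
    rw [Nat.mem_primeFactors]
    refine ⟨hpp, ?_, hn0⟩
    by_contra hpn
    have h0 : n.factorization p = 0 := Nat.factorization_eq_zero_of_not_dvd hpn
    have := hkey p hpp
    rw [h0] at this
    simp only [pow_zero, one_pow] at this
    have hge : p ≤ p ^ cM.factorization p := Nat.le_self_pow hppos.ne' p
    have h8 := le_trans hge this
    have h2p := hpp.two_le
    omega
  have hcMle : cM ≤ n ^ c := by
    have hprod : (∏ p ∈ cM.primeFactors, p ^ n.factorization p) ∣ n := by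
      have h7 : (∏ p ∈ cM.primeFactors, p ^ n.factorization p) ∣
          ∏ p ∈ n.primeFactors, p ^ n.factorization p :=
        Finset.prod_dvd_prod_of_subset _ _ _ hsubPF
      refine h7.trans ?_
      have h8 : ∏ p ∈ n.primeFactors, p ^ n.factorization p = n := by
        rw [← Nat.prod_factorization_eq_prod_primeFactors]
        exact Nat.factorization_prod_pow_eq_self hn0
      rw [h8]
    calc cM = ∏ p ∈ cM.primeFactors, p ^ cM.factorization p := by
          rw [← Nat.prod_factorization_eq_prod_primeFactors]
          exact (Nat.factorization_prod_pow_eq_self hcM0).symm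
      _ ≤ ∏ p ∈ cM.primeFactors, (p ^ n.factorization p) ^ c := by
          apply Finset.prod_le_prod'
          intro p hp
          exact hkey p (Nat.prime_of_mem_primeFactors hp)
      _ = (∏ p ∈ cM.primeFactors, p ^ n.factorization p) ^ c := by
          rw [← Finset.prod_pow]
      _ ≤ n ^ c := Nat.pow_le_pow_left
          (Nat.le_of_dvd (Nat.pos_of_ne_zero hn0) hprod) c
  calc Nat.card ↥H = Nat.card ↥(f.ker) * Nat.card ↥(f.range) := hsplit
    _ ≤ cM * n := Nat.mul_le_mul (le_of_eq hcardker) hr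
    _ ≤ n ^ c * n := Nat.mul_le_mul_right n hcMle
    _ = n ^ (c + 1) := (pow_succ n c).symm
    _ = n ^ (1 + c) := by rw [Nat.add_comm]
end Main


end SchurAux

/-- given a free presentation `1 → N → F → E → 1` of a finite group `E`
(with `F = FreeGroup α` free and `N = ker φ`), the index of `[F,N]` in `[F,F]` is
finite and at most `|E| ^ (1 + log₂ |E|)`. -/
theorem stmt6 {α : Type*} {E : Type*} [Group E] [Finite E]
    (φ : FreeGroup α →* E) (hφ : Function.Surjective φ) :
    0 < ⁅(⊤ : Subgroup (FreeGroup α)), φ.ker⁆.relIndex (commutator (FreeGroup α)) ∧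
    ((⁅(⊤ : Subgroup (FreeGroup α)), φ.ker⁆.relIndex (commutator (FreeGroup α)) : ℝ) ≤
      (Nat.card E : ℝ) ^ (1 + Real.logb 2 (Nat.card E))) := by
  set F := FreeGroup α
  set T : Subgroup F := ⁅(⊤ : Subgroup F), φ.ker⁆ with hT
  haveI hTn : T.Normal := Subgroup.commutator_normal ⊤ φ.ker
  have hTker : T ≤ φ.ker := Subgroup.commutator_le_right ⊤ φ.ker
  set q : F →* F ⧸ T := QuotientGroup.mk' T with hq
  set ψ : (F ⧸ T) →* E := QuotientGroup.lift T φ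
    (fun x hx => MonoidHom.mem_ker.mp (hTker hx)) with hψ
  have hcomp : ∀ x : F, ψ (q x) = φ x := fun x => rfl
  have hψsurj : Function.Surjective ψ := by
    intro e
    obtain ⟨x, hx⟩ := hφ e
    exact ⟨q x, by rw [hcomp, hx]⟩
  have hψker : ψ.ker ≤ Subgroup.center (F ⧸ T) := by
    intro u hu
    obtain ⟨x, rfl⟩ := QuotientGroup.mk'_surjective T u
    have hxker : x ∈ φ.ker := by
      rw [MonoidHom.mem_ker, ← hcomp]
      exact MonoidHom.mem_ker.mp hu
    rw [Subgroup.mem_center_iff]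
    intro b
    obtain ⟨y, rfl⟩ := QuotientGroup.mk'_surjective T b
    show q y * q x = q x * q y
    rw [← map_mul, ← map_mul]
    have hmem : (y * x) * (x * y)⁻¹ ∈ T := by
      have he : (y * x) * (x * y)⁻¹ = (open scoped commutatorElement in ⁅y, x⁆) := by
        rw [commutatorElement_def, mul_inv_rev, ← mul_assoc]
      rw [he, hT]
      exact Subgroup.commutator_mem_commutator (Subgroup.mem_top y) hxker
    have h1 : q ((y * x) * (x * y)⁻¹) = 1 := by
      rw [← MonoidHom.mem_ker, hq, QuotientGroup.ker_mk']
      exact hmem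
    rw [map_mul, map_inv] at h1
    exact (mul_inv_eq_one.mp h1)
  -- relindex equals the card of the commutator of the quotient
  set Hc : Subgroup F := commutator F with hHc
  have hTHc : T ≤ Hc := by
    rw [hT, hHc, _root_.commutator_def]
    exact Subgroup.commutator_mono (le_refl ⊤) le_top
  have hrel : T.relIndex Hc = Nat.card ↥(_root_.commutator (F ⧸ T)) := by
    set f : ↥Hc →* F ⧸ T := q.comp Hc.subtype with hf
    have h1 : f.ker = T.subgroupOf Hc := by
      rw [hf, ← MonoidHom.comap_ker, hq, QuotientGroup.ker_mk']; rfl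
    have h2 : f.range = _root_.commutator (F ⧸ T) := by
      rw [hf, MonoidHom.range_comp, Subgroup.range_subtype, hHc, _root_.commutator_def,
        Subgroup.map_commutator, Subgroup.map_top_of_surjective _ (QuotientGroup.mk'_surjective T),
        _root_.commutator_def]
    have h3 : T.relIndex Hc = f.ker.index := by rw [h1]; rfl
    rw [h3, Subgroup.index_ker, h2]
  obtain ⟨hpos, hle⟩ := SchurAux.main_card ψ hψsurj hψker
  constructor
  · rw [hrel]; exact hpos
  · rw [hrel]
    set n := Nat.card E with hn
    have hn1 : 1 ≤ n := Nat.one_le_iff_ne_zero.mpr Nat.card_pos.ne'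
    set c := Nat.log 2 n with hc
    have hcast1 : (Nat.card ↥(_root_.commutator (F ⧸ T)) : ℝ) ≤ ((n : ℝ)) ^ ((1 + c : ℕ) : ℝ) := by
      rw [Real.rpow_natCast]
      calc (Nat.card ↥(_root_.commutator (F ⧸ T)) : ℝ) ≤ ((n ^ (1 + c) : ℕ) : ℝ) := by
            exact_mod_cast hle
        _ = (n : ℝ) ^ (1 + c) := by push_cast; ring
    have hexp : ((1 + c : ℕ) : ℝ) ≤ 1 + Real.logb 2 n := by
      push_cast
      have h9 := Real.natLog_le_logb n 2
      rw [← hc] at h9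
      norm_num at h9
      linarith
    calc (Nat.card ↥(_root_.commutator (F ⧸ T)) : ℝ)
        ≤ ((n : ℝ)) ^ ((1 + c : ℕ) : ℝ) := hcast1
      _ ≤ (n : ℝ) ^ (1 + Real.logb 2 n) := by
          apply Real.rpow_le_rpow_of_exponent_le _ hexp
          exact_mod_cast hn1
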